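/- Let $-3 < \gamma < 0$, $\mu(v) = (2\pi)^{-3/2}e^{-|v|^2/2}$, $a_{ij}(v) = (\delta_{ij}|v|^2 - v_i v_j)|v|^\gamma$, and $\bar{a}_{ij} = a_{ij} * \mu$. Then there exists a constant $C > 0$ such that for all $1 \le i,j \le 3$ and all $v \in \mathbb{R}^3$, $|\bar{a}_{ij}(v)| \le C \langle v\rangle^{\gamma+2}$. -/

import Mathlib

noncomputable section

open MeasureTheory Real

abbrev V3 : Type := Fin 3 → ℝ

/-- squared Euclidean norm on `ℝ³` -/
def en2 (v : V3) : ℝ := ∑ i, (v i) ^ 2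

/-- Euclidean norm on `ℝ³` -/
def en (v : V3) : ℝ := Real.sqrt (en2 v)

/-- Japanese bracket `⟨v⟩ = (1+|v|²)^{1/2}` -/
def jap (v : V3) : ℝ := Real.sqrt (1 + en2 v)

/-- partial derivative `∂ᵢ` -/
def pd (i : Fin 3) (f : V3 → ℝ) : V3 → ℝ := fun v => fderiv ℝ f v (Pi.single i 1)

/-- multi-index derivative `∂^α` -/
def pdm (α : Fin 3 → ℕ) (f : V3 → ℝ) : V3 → ℝ :=
  (pd 0)^[α 0] ((pd 1)^[α 1] ((pd 2)^[α 2] f))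

/-- length `|α|` of a multi-index -/
def mdeg (α : Fin 3 → ℕ) : ℕ := ∑ i, α i

/-- factorial `α!` of a multi-index -/
def mfact (α : Fin 3 → ℕ) : ℕ := ∏ i, Nat.factorial (α i)

/-- binomial coefficient of multi-indices -/
def mchoose (α β : Fin 3 → ℕ) : ℕ := ∏ i, Nat.choose (α i) (β i)

/-- Maxwellian distribution `μ` -/
def maxw (v : V3) : ℝ := (2 * π) ^ (-(3 : ℝ) / 2) * Real.exp (-en2 v / 2)

/-- kernel coefficients `aᵢⱼ(v) = (δᵢⱼ|v|² - vᵢvⱼ)|v|^γ` -/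
def aK (γ : ℝ) (i j : Fin 3) (v : V3) : ℝ :=
  ((if i = j then en2 v else 0) - v i * v j) * en v ^ γ

/-- convolution on `ℝ³` -/
def conv (f g : V3 → ℝ) (v : V3) : ℝ := ∫ w, f (v - w) * g w

/-- `ā_{ij} = a_{ij} * μ` -/
def abar (γ : ℝ) (i j : Fin 3) : V3 → ℝ := conv (aK γ i j) maxw

/-- weighted L² norm `‖⟨v⟩^θ f‖_{L²}` -/
def wnorm (θ : ℝ) (f : V3 → ℝ) : ℝ := Real.sqrt (∫ v, jap v ^ (2 * θ) * (f v) ^ 2)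

/-- L² norm -/
def L2norm (f : V3 → ℝ) : ℝ := Real.sqrt (∫ v, (f v) ^ 2)

/-- weighted anisotropic norm squared `‖u‖²_{A,θ}` -/
def AnormSq (γ θ : ℝ) (u : V3 → ℝ) : ℝ :=
  ∑ j, ∑ k, ∫ v, jap v ^ (2 * θ) *
    (abar γ j k v * pd j u v * pd k u v + (1 / 4) * abar γ j k v * v j * v k * (u v) ^ 2)

/-- weighted anisotropic norm `‖u‖_{A,θ}` -/
def Anorm (γ θ : ℝ) (u : V3 → ℝ) : ℝ := Real.sqrt (AnormSq γ θ u)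

/-- the linear Landau operator
`ℒf = ∇·[A∇f] - (A v/2 · v/2) f + ∇·[A v/2] f` -/
def Lop (γ : ℝ) (f : V3 → ℝ) (v : V3) : ℝ :=
  (∑ i, ∑ j, pd i (fun w => abar γ i j w * pd j f w) v)
    - (1 / 4) * (∑ i, ∑ j, abar γ i j v * v i * v j) * f v
    + (1 / 2) * (∑ i, ∑ j, pd i (fun w => abar γ i j w * w j) v) * f v

/-- weak solution of `∂ₜ f = ℒ f`, `f|_{t=0} = f₀`, tested against smooth
Schwartz-valued test functions vanishing at `t = T` -/
def IsWeakSol (γ T : ℝ) (f0 : V3 → ℝ) (f : ℝ → V3 → ℝ) : Prop :=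
  ∀ φ : ℝ → SchwartzMap V3 ℝ,
    ContDiff ℝ (⊤ : ℕ∞) (fun p : ℝ × V3 => φ p.1 p.2) →
    φ T = 0 →
    (∫ t in (0 : ℝ)..T, ∫ v, f t v *
        (deriv (fun s => φ s v) t + Lop γ (fun w => φ t w) v))
      + (∫ v, f0 v * φ 0 v) = 0

/-- membership in `L^∞([0,T]; L²(ℝ³))` -/
def InLinfL2 (T : ℝ) (f : ℝ → V3 → ℝ) : Prop :=
  (∀ t ∈ Set.Icc (0 : ℝ) T, MemLp (f t) 2 volume) ∧
  ∃ M : ℝ, ∀ t ∈ Set.Icc (0 : ℝ) T, eLpNorm (f t) 2 volume ≤ ENNReal.ofReal M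


/-! ### Auxiliary lemmas for the proof -/

section Aux

open Set Filter

lemma en2_nonneg (v : V3) : 0 ≤ en2 v :=
  Finset.sum_nonneg fun _ _ => sq_nonneg _

lemma en_nonneg (v : V3) : 0 ≤ en v := Real.sqrt_nonneg _

lemma sq_en (v : V3) : en v ^ 2 = en2 v := Real.sq_sqrt (en2_nonneg v)

lemma en2_eq_zero {v : V3} (h : en2 v = 0) : v = 0 := by
  funext i
  have h2 := (Finset.sum_eq_zero_iff_of_nonneg (fun i _ => sq_nonneg (v i))).1 h i
    (Finset.mem_univ i)
  have := pow_eq_zero_iff (n := 2) (by norm_num) |>.1 h2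
  simpa using this

lemma en_eq_zero {v : V3} (h : en v = 0) : v = 0 := by
  apply en2_eq_zero
  have := sq_en v
  rw [h] at this
  simpa using this.symm

lemma en_pos_of_ne {v : V3} (h : v ≠ 0) : 0 < en v :=
  lt_of_le_of_ne (en_nonneg v) (fun h0 => h (en_eq_zero h0.symm))

lemma coord_le_en (v : V3) (i : Fin 3) : |v i| ≤ en v := by
  rw [en, ← Real.sqrt_sq_eq_abs]
  exact Real.sqrt_le_sqrt (Finset.single_le_sum (f := fun j => (v j) ^ 2)
    (fun j _ => sq_nonneg _) (Finset.mem_univ i))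

lemma en_add_le (a b : V3) : en (a + b) ≤ en a + en b := by
  have hcs : ∑ i, a i * b i ≤ en a * en b := by
    simpa [en, en2] using Real.sum_mul_le_sqrt_mul_sqrt Finset.univ a b
  have hexp : en2 (a + b) = en2 a + 2 * (∑ i, a i * b i) + en2 b := by
    simp only [en2, Pi.add_apply, add_sq, Finset.sum_add_distrib, Finset.mul_sum]
    ring_nf
  have h1 : en2 (a + b) ≤ (en a + en b) ^ 2 := by
    have hsq : (en a + en b) ^ 2 = en2 a + 2 * (en a * en b) + en2 b := by
      rw [add_sq, sq_en, sq_en]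
      ring
    nlinarith [en_nonneg a, en_nonneg b]
  calc en (a + b) = Real.sqrt (en2 (a + b)) := rfl
    _ ≤ Real.sqrt ((en a + en b) ^ 2) := Real.sqrt_le_sqrt h1
    _ = en a + en b := Real.sqrt_sq (by linarith [en_nonneg a, en_nonneg b])

lemma en_neg (v : V3) : en (-v) = en v := by
  simp [en, en2]

lemma en_sub_le (a b : V3) : en (a - b) ≤ en a + en b := by
  calc en (a - b) = en (a + (-b)) := by rw [sub_eq_add_neg]
    _ ≤ en a + en (-b) := en_add_le a (-b)
    _ = en a + en b := by rw [en_neg]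

lemma en_le_en_sub_add (v w : V3) : en v ≤ en (v - w) + en w := by
  have := en_add_le (v - w) w
  simpa using this

lemma one_le_jap (v : V3) : 1 ≤ jap v := by
  rw [jap]
  have h1 : (1 : ℝ) = Real.sqrt 1 := by simp
  rw [h1]
  exact Real.sqrt_le_sqrt (by linarith [en2_nonneg v])

lemma jap_pos (v : V3) : 0 < jap v := lt_of_lt_of_le one_pos (one_le_jap v)

lemma en_le_jap (v : V3) : en v ≤ jap v :=
  Real.sqrt_le_sqrt (by linarith [en2_nonneg v])

lemma jap_le_one_add_en (v : V3) : jap v ≤ 1 + en v := by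
  rw [jap]
  have h : 1 + en2 v ≤ (1 + en v) ^ 2 := by
    rw [add_sq, sq_en]
    nlinarith [en_nonneg v]
  calc Real.sqrt (1 + en2 v) ≤ Real.sqrt ((1 + en v) ^ 2) := Real.sqrt_le_sqrt h
    _ = 1 + en v := Real.sqrt_sq (by linarith [en_nonneg v])

lemma continuous_en2 : Continuous en2 :=
  continuous_finset_sum _ fun i _ => (continuous_apply i).pow 2

lemma continuous_en : Continuous en := Real.continuous_sqrt.comp continuous_en2

/-! #### Gaussian integrability on `V3` -/

lemma gauss_prod (b : ℝ) :
    (fun w : V3 => Real.exp (-(b * en2 w))) = fun w => ∏ i, Real.exp (-(b * (w i) ^ 2)) := by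
  funext w
  rw [← Real.exp_sum]
  congr 1
  simp [en2, Finset.mul_sum]


lemma gauss_integrable {b : ℝ} (hb : 0 < b) :
    Integrable (fun w : V3 => Real.exp (-(b * en2 w))) := by
  rw [gauss_prod]
  exact Integrable.fintype_prod (f := fun (_ : Fin 3) (t : ℝ) => Real.exp (-(b * t ^ 2)))
    fun _ => by simpa [neg_mul] using integrable_exp_neg_mul_sq hb

lemma integrable_gexp : Integrable (fun w : V3 => Real.exp (-en2 w / 2)) := by
  have h := gauss_integrable (b := 1/2) (by norm_num)
  have heq : (fun w : V3 => Real.exp (-(1/2 * en2 w))) = fun w => Real.exp (-en2 w / 2) := by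
    funext w; congr 1; ring
  rwa [heq] at h

lemma gexp_nonneg (w : V3) : 0 ≤ Real.exp (-en2 w / 2) := (Real.exp_pos _).le

lemma integrable_poly_gauss :
    Integrable (fun w : V3 => (1 + en w) ^ 2 * Real.exp (-en2 w / 2)) := by
  have hm : AEStronglyMeasurable (fun w : V3 => (1 + en w) ^ 2 * Real.exp (-en2 w / 2)) volume :=
    (((continuous_const.add continuous_en).pow 2).mul
      ((continuous_en2.neg.div_const 2).rexp)).aestronglyMeasurable
  refine Integrable.mono' ((gauss_integrable (b := 1/4) (by norm_num)).const_mul 8) hm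
    (Filter.Eventually.of_forall fun w => ?_)
  have h0 : 0 ≤ en w := en_nonneg w
  have h1 : en w ^ 2 = en2 w := sq_en w
  have h2 : (1 + en w) ^ 2 ≤ 2 + 2 * en2 w := by nlinarith [sq_nonneg (en w - 1)]
  have h3 : Real.exp (-en2 w / 2) = Real.exp (-(1/4 * en2 w)) * Real.exp (-(1/4 * en2 w)) := by
    rw [← Real.exp_add]; congr 1; ring
  have h4 : (0:ℝ) < Real.exp (-(1/4 * en2 w)) := Real.exp_pos _
  have h5 : 2 + 2 * en2 w ≤ 8 * Real.exp (1/4 * en2 w) := by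
    have := Real.add_one_le_exp (1/4 * en2 w)
    nlinarith [en2_nonneg w]
  have h6 : Real.exp (-(1/4 * en2 w)) * Real.exp (1/4 * en2 w) = 1 := by
    rw [← Real.exp_add]; simp
  have hnorm : ‖(1 + en w) ^ 2 * Real.exp (-en2 w / 2)‖
      = (1 + en w) ^ 2 * Real.exp (-en2 w / 2) := by
    rw [Real.norm_eq_abs, abs_of_nonneg (by positivity)]
  rw [hnorm, h3]
  nlinarith [mul_le_mul_of_nonneg_right h2 h4.le, mul_le_mul_of_nonneg_right h5 h4.le]

/-! #### Measurability of the main integrand -/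

lemma ae_ne_singleton (v : V3) : ∀ᵐ w : V3, w ≠ v := by
  have h : volume ({v} : Set V3) = 0 := measure_singleton v
  filter_upwards [measure_eq_zero_iff_ae_notMem.mp h] with w hw
  simpa using hw

lemma aesm_integrand (v : V3) (p : ℝ) :
    AEStronglyMeasurable (fun w : V3 => en (v - w) ^ p * Real.exp (-en2 w / 2)) volume := by
  have hg : Measurable (fun w : V3 =>
      Real.exp (Real.log (en (v - w)) * p) * Real.exp (-en2 w / 2)) := by
    have h1 : Continuous (fun w : V3 => en (v - w)) :=
      continuous_en.comp (continuous_const.sub continuous_id)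
    exact ((Real.measurable_log.comp h1.measurable).mul_const p).exp.mul
      ((continuous_en2.neg.div_const 2).rexp).measurable
  refine hg.aestronglyMeasurable.congr ?_
  filter_upwards [ae_ne_singleton v] with w hw
  have hvw : v - w ≠ 0 := sub_ne_zero.2 (fun h => hw h.symm)
  rw [Real.rpow_def_of_pos (en_pos_of_ne hvw)]

/-! #### Boxes -/

def box (v : V3) (r : ℝ) : Set V3 := Set.pi Set.univ (fun i => Ioo (v i - r) (v i + r))

lemma measurableSet_box (v : V3) (r : ℝ) : MeasurableSet (box v r) :=
  MeasurableSet.univ_pi fun _ => measurableSet_Ioo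

lemma mem_box {v : V3} {r : ℝ} {w : V3} :
    w ∈ box v r ↔ ∀ i, w i ∈ Ioo (v i - r) (v i + r) := by simp [box]

lemma volume_box (v : V3) {r : ℝ} (hr : 0 ≤ r) :
    volume (box v r) = ENNReal.ofReal ((2 * r) ^ 3) := by
  rw [box, volume_pi_pi]
  have h : ∀ i : Fin 3, volume (Ioo (v i - r) (v i + r)) = ENNReal.ofReal (2 * r) := by
    intro i; rw [Real.volume_Ioo]; congr 1; ring
  simp only [h]
  rw [Finset.prod_const, ENNReal.ofReal_pow (by positivity)]
  simp

lemma volume_box_ne_top (v : V3) (r : ℝ) : volume (box v r) ≠ ⊤ := by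
  rcases le_or_gt 0 r with hr | hr
  · rw [volume_box v hr]; exact ENNReal.ofReal_ne_top
  · have : box v r = ∅ := by
      ext w; simp only [mem_box, Set.mem_empty_iff_false, iff_false]
      intro h
      have := h 0
      simp only [Set.mem_Ioo] at this
      linarith [this.1, this.2]
    simp [this]

lemma enball_subset_box (v : V3) (r : ℝ) : {w : V3 | en (v - w) < r} ⊆ box v r := by
  intro w hw
  rw [mem_box]
  intro i
  have h : |v i - w i| ≤ en (v - w) := by simpa using coord_le_en (v - w) i
  have h2 : |v i - w i| < r := lt_of_le_of_lt h hw
  rw [abs_lt] at h2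
  exact ⟨by linarith [h2.1, h2.2], by linarith [h2.1, h2.2]⟩

lemma measurableSet_enball (v : V3) (r : ℝ) : MeasurableSet {w : V3 | en (v - w) < r} := by
  have : Continuous fun w : V3 => en (v - w) :=
    continuous_en.comp (continuous_const.sub continuous_id)
  exact measurableSet_lt this.measurable measurable_const

/-! #### 1D singular integral -/

lemma oneD_intervalIntegrable {p : ℝ} (hp : -1 < p) :
    IntervalIntegrable (fun x : ℝ => |x| ^ p) volume (-1) 1 := by
  have h1 : IntervalIntegrable (fun x : ℝ => x ^ p) volume 0 1 :=
    intervalIntegral.intervalIntegrable_rpow' hp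
  have h1' : IntegrableOn (fun x : ℝ => x ^ p) (Ioc 0 1) volume :=
    (intervalIntegrable_iff_integrableOn_Ioc_of_le zero_le_one).1 h1
  have habs : IntegrableOn (fun x : ℝ => |x| ^ p) (Ioc 0 1) volume :=
    h1'.congr_fun (fun x hx => by rw [abs_of_pos hx.1]) measurableSet_Ioc
  have habs01 : IntervalIntegrable (fun x : ℝ => |x| ^ p) volume 0 1 :=
    (intervalIntegrable_iff_integrableOn_Ioc_of_le zero_le_one).2 habs
  have h2 := (IntervalIntegrable.iff_comp_neg (f := fun x : ℝ => |x| ^ p) (a := 0) (b := 1)).1 habs01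
  simp only [abs_neg, neg_zero] at h2
  exact h2.symm.trans habs01

lemma oneD_shift {p : ℝ} (hp : -1 < p) (c : ℝ) :
    IntegrableOn (fun t : ℝ => |c - t| ^ p) (Ioo (c - 1) (c + 1)) volume := by
  have h : IntervalIntegrable (fun t : ℝ => |c - t| ^ p) volume (c + 1) (c - 1) := by
    simpa using (oneD_intervalIntegrable hp).comp_sub_left c
  exact ((intervalIntegrable_iff_integrableOn_Ioc_of_le (by linarith : c - 1 ≤ c + 1)).1
    h.symm).mono_set Ioo_subset_Ioc_self

lemma oneD_integral (p : ℝ) (c : ℝ) :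
    ∫ t in Ioo (c - 1) (c + 1), |c - t| ^ p = ∫ x in (-1:ℝ)..1, |x| ^ p := by
  have hae : volume.restrict (Ioo (c - 1) (c + 1)) = volume.restrict (Ioc (c - 1) (c + 1)) :=
    Measure.restrict_congr_set Ioo_ae_eq_Ioc
  rw [hae, ← intervalIntegral.integral_of_le (by linarith : c - 1 ≤ c + 1)]
  have h := intervalIntegral.integral_comp_sub_left (a := c - 1) (b := c + 1)
    (fun x : ℝ => |x| ^ p) c
  simp only [show c - (c + 1) = -1 by ring, show c - (c - 1) = 1 by ring] at h
  exact h

lemma box_integral_bound {p : ℝ} (hp : -1 < p) (v : V3) :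
    IntegrableOn (fun w : V3 => |v 0 - w 0| ^ p) (box v 1) volume ∧
    ∫ w in box v 1, |v 0 - w 0| ^ p ≤ 4 * ∫ x in (-1:ℝ)..1, |x| ^ p := by
  set g : Fin 3 → ℝ → ℝ := fun i t =>
    (Ioo (v i - 1) (v i + 1)).indicator (fun u => if i = 0 then |v 0 - u| ^ p else 1) t with hg
  have hgint : ∀ i, Integrable (g i) := by
    intro i
    rw [hg]
    by_cases hi : i = 0
    · subst hi
      simp only [if_pos rfl]
      exact (integrable_indicator_iff measurableSet_Ioo).2 (oneD_shift hp (v 0))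
    · simp only [if_neg hi]
      refine (integrable_indicator_iff measurableSet_Ioo).2 ?_
      exact integrableOn_const (by rw [Real.volume_Ioo]; exact ENNReal.ofReal_ne_top)
  have hGeq : (fun w : V3 => ∏ i, g i (w i)) =
      (box v 1).indicator (fun w => |v 0 - w 0| ^ p) := by
    funext w
    by_cases hw : w ∈ box v 1
    · rw [Set.indicator_of_mem hw]
      have hm := mem_box.1 hw
      rw [Fin.prod_univ_three, hg]
      simp only [Set.indicator_of_mem (hm 0), Set.indicator_of_mem (hm 1),
        Set.indicator_of_mem (hm 2)]
      norm_num [Fin.ext_iff]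
    · rw [Set.indicator_of_notMem hw]
      obtain ⟨i, hi⟩ : ∃ i, w i ∉ Ioo (v i - 1) (v i + 1) := by
        by_contra hcon
        push_neg at hcon
        exact hw (mem_box.2 hcon)
      refine Finset.prod_eq_zero (Finset.mem_univ i) ?_
      rw [hg]
      exact Set.indicator_of_notMem hi _
  have hGint : Integrable (fun w : V3 => ∏ i, g i (w i)) := Integrable.fintype_prod hgint
  constructor
  · rw [← integrable_indicator_iff (measurableSet_box v 1), ← hGeq]
    exact hGint
  · have hval : ∫ w in box v 1, |v 0 - w 0| ^ p = ∏ i, ∫ t : ℝ, g i t := by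
      rw [← integral_indicator (measurableSet_box v 1), ← hGeq]
      exact integral_fintype_prod_eq_prod (μ := fun _ => volume) g
    rw [hval, Fin.prod_univ_three]
    have h0 : ∫ t : ℝ, g 0 t = ∫ x in (-1:ℝ)..1, |x| ^ p := by
      rw [hg]
      simp only [if_pos rfl]
      rw [integral_indicator measurableSet_Ioo]
      exact oneD_integral p (v 0)
    have h1 : ∀ i : Fin 3, i ≠ 0 → ∫ t : ℝ, g i t = 2 := by
      intro i hi
      rw [hg]
      simp only [if_neg hi]
      rw [integral_indicator_const (1:ℝ) measurableSet_Ioo]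
      rw [measureReal_def, Real.volume_Ioo]
      norm_num
    rw [h0, h1 1 (by decide), h1 2 (by decide)]
    have hc : 0 ≤ ∫ x in (-1:ℝ)..1, |x| ^ p :=
      intervalIntegral.integral_nonneg (by norm_num)
        (fun x _ => Real.rpow_nonneg (abs_nonneg x) p)
    linarith

/-! #### The key convolution estimate -/

lemma integrand_nonneg (v : V3) (p : ℝ) (w : V3) :
    0 ≤ en (v - w) ^ p * Real.exp (-en2 w / 2) :=
  mul_nonneg (Real.rpow_nonneg (en_nonneg _) p) (gexp_nonneg w)

lemma F3_nonneg {p : ℝ} (hp0 : 0 ≤ p) (hp2 : p ≤ 2) (v : V3) :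
    Integrable (fun w : V3 => en (v - w) ^ p * Real.exp (-en2 w / 2)) ∧
    ∫ w, en (v - w) ^ p * Real.exp (-en2 w / 2)
      ≤ (∫ w : V3, (1 + en w) ^ 2 * Real.exp (-en2 w / 2)) * jap v ^ p := by
  set J := jap v with hJ
  have hJ1 : 1 ≤ J := one_le_jap v
  have hbound : ∀ w : V3, en (v - w) ^ p * Real.exp (-en2 w / 2)
      ≤ J ^ p * ((1 + en w) ^ 2 * Real.exp (-en2 w / 2)) := by
    intro w
    have h1 : en (v - w) ≤ J * (1 + en w) := by
      have ht := en_sub_le v w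
      have h2 := en_le_jap v
      have h3 : en w ≤ J * en w := le_mul_of_one_le_left (en_nonneg w) hJ1
      nlinarith [en_nonneg w]
    have h4 : en (v - w) ^ p ≤ (J * (1 + en w)) ^ p :=
      Real.rpow_le_rpow (en_nonneg _) h1 hp0
    have h5 : (J * (1 + en w)) ^ p = J ^ p * (1 + en w) ^ p :=
      Real.mul_rpow (by linarith) (by linarith [en_nonneg w])
    have h6 : (1 + en w) ^ p ≤ (1 + en w) ^ 2 := by
      rw [← Real.rpow_two]
      exact Real.rpow_le_rpow_of_exponent_le (by linarith [en_nonneg w]) hp2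
    calc en (v - w) ^ p * Real.exp (-en2 w / 2)
        ≤ (J * (1 + en w)) ^ p * Real.exp (-en2 w / 2) :=
          mul_le_mul_of_nonneg_right h4 (gexp_nonneg w)
      _ = J ^ p * (1 + en w) ^ p * Real.exp (-en2 w / 2) := by rw [h5]
      _ ≤ J ^ p * (1 + en w) ^ 2 * Real.exp (-en2 w / 2) := by
          refine mul_le_mul_of_nonneg_right ?_ (gexp_nonneg w)
          exact mul_le_mul_of_nonneg_left h6 (Real.rpow_nonneg (by linarith) p)
      _ = J ^ p * ((1 + en w) ^ 2 * Real.exp (-en2 w / 2)) := by ring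
  have hdom : Integrable (fun w : V3 => J ^ p * ((1 + en w) ^ 2 * Real.exp (-en2 w / 2))) :=
    integrable_poly_gauss.const_mul _
  have hint : Integrable (fun w : V3 => en (v - w) ^ p * Real.exp (-en2 w / 2)) := by
    refine hdom.mono' (aesm_integrand v p) (Filter.Eventually.of_forall fun w => ?_)
    rw [Real.norm_eq_abs, abs_of_nonneg (integrand_nonneg v p w)]
    exact hbound w
  refine ⟨hint, ?_⟩
  calc ∫ w, en (v - w) ^ p * Real.exp (-en2 w / 2)
      ≤ ∫ w, J ^ p * ((1 + en w) ^ 2 * Real.exp (-en2 w / 2)) := integral_mono hint hdom hbound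
    _ = J ^ p * ∫ w : V3, (1 + en w) ^ 2 * Real.exp (-en2 w / 2) := integral_const_mul _ _
    _ = (∫ w : V3, (1 + en w) ^ 2 * Real.exp (-en2 w / 2)) * J ^ p := mul_comm _ _

lemma F3_neg {p : ℝ} (hp1 : -1 < p) (hpneg : p < 0) (v : V3) :
    Integrable (fun w : V3 => en (v - w) ^ p * Real.exp (-en2 w / 2)) ∧
    ∫ w, en (v - w) ^ p * Real.exp (-en2 w / 2)
      ≤ (4 * (∫ x in (-1:ℝ)..1, |x| ^ p) * Real.exp (3/2) + 8 * Real.exp 36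
          + 2 * (∫ w : V3, Real.exp (-en2 w / 2))) * jap v ^ p := by
  set t := en v with ht
  set J := jap v with hJdef
  have hJ1 : 1 ≤ J := one_le_jap v
  have hJpos : 0 < J := jap_pos v
  have ht0 : 0 ≤ t := en_nonneg v
  have htJ : t ≤ J := en_le_jap v
  have hJt : J ≤ Real.exp t := le_trans (jap_le_one_add_en v)
    (by linarith [Real.add_one_le_exp t])
  set r := max 1 (J / 2) with hr
  have hr1 : 1 ≤ r := le_max_left _ _
  have hr0 : 0 < r := lt_of_lt_of_le one_pos hr1
  have hrJ : r ≤ J := max_le hJ1 (by linarith)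
  have hrJ2 : J / 2 ≤ r := le_max_right _ _
  set A := {w : V3 | en (v - w) < r} with hA
  set B := {w : V3 | en (v - w) < 1} with hB
  have hBA : B ⊆ A := fun w hw => lt_of_lt_of_le hw hr1
  have measA : MeasurableSet A := measurableSet_enball v r
  have measB : MeasurableSet B := measurableSet_enball v 1
  set f := fun w : V3 => en (v - w) ^ p * Real.exp (-en2 w / 2) with hf
  have hfnonneg : ∀ w, 0 ≤ f w := integrand_nonneg v p
  set c₀ := ∫ x in (-1:ℝ)..1, |x| ^ p with hc₀
  have hc₀0 : 0 ≤ c₀ := intervalIntegral.integral_nonneg (by norm_num)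
    (fun x _ => Real.rpow_nonneg (abs_nonneg x) p)
  set Dv := Real.exp (-(max (t - 1) 0) ^ 2 / 2) with hDv
  set D2 := Real.exp (-(max ((t - 1) / 2) 0) ^ 2 / 2) with hD2
  set K0 := ∫ w : V3, Real.exp (-en2 w / 2) with hK0
  have hK00 : 0 ≤ K0 := integral_nonneg gexp_nonneg
  -- bound on B : the exponential factor
  have hexpB : ∀ w ∈ B, Real.exp (-en2 w / 2) ≤ Dv := by
    intro w hw
    have htri := en_le_en_sub_add v w
    have hwB : en (v - w) < 1 := hw
    have hm : max (t - 1) 0 ≤ en w := max_le (by linarith) (en_nonneg w)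
    have hsq : (max (t - 1) 0) ^ 2 ≤ en2 w := by
      rw [← sq_en w]
      exact pow_le_pow_left₀ (le_max_right _ _) hm 2
    exact Real.exp_le_exp.2 (by linarith)
  -- bound on A : the exponential factor
  have hexpA : ∀ w ∈ A, Real.exp (-en2 w / 2) ≤ D2 := by
    intro w hw
    have htri := en_le_en_sub_add v w
    have hwA : en (v - w) < r := hw
    have hm : max ((t - 1) / 2) 0 ≤ en w := by
      refine max_le ?_ (en_nonneg w)
      rcases le_or_gt 1 t with h1 | h1
      · have hrle : r ≤ (1 + t) / 2 := max_le (by linarith) (by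
          have := jap_le_one_add_en v
          rw [← ht, ← hJdef] at this
          linarith)
        linarith
      · linarith [en_nonneg w, en_nonneg (v - w)]
    have hsq : (max ((t - 1) / 2) 0) ^ 2 ≤ en2 w := by
      rw [← sq_en w]
      exact pow_le_pow_left₀ (le_max_right _ _) hm 2
    exact Real.exp_le_exp.2 (by linarith)
  -- constants
  have hDvJ : Dv ≤ Real.exp (3/2) * J ^ p := by
    have key : Dv * J ≤ Real.exp (3/2) := by
      calc Dv * J ≤ Dv * Real.exp t :=
            mul_le_mul_of_nonneg_left hJt (Real.exp_pos _).le
        _ = Real.exp (t - (max (t - 1) 0) ^ 2 / 2) := by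
            rw [← Real.exp_add]; congr 1; ring
        _ ≤ Real.exp (3/2) := by
            apply Real.exp_le_exp.2
            rcases le_or_gt 1 t with h1 | h1
            · rw [max_eq_left (by linarith)]
              nlinarith [sq_nonneg (t - 2)]
            · rw [max_eq_right (by linarith)]
              norm_num; linarith
    have hJp1 : (1:ℝ) ≤ J ^ (p + 1) := Real.one_le_rpow hJ1 (by linarith)
    have h2 : Dv * J ≤ (Real.exp (3/2) * J ^ p) * J := by
      have : (Real.exp (3/2) * J ^ p) * J = Real.exp (3/2) * J ^ (p + 1) := by
        rw [Real.rpow_add_one hJpos.ne' p]; ring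
      rw [this]
      calc Dv * J ≤ Real.exp (3/2) := key
        _ = Real.exp (3/2) * 1 := (mul_one _).symm
        _ ≤ Real.exp (3/2) * J ^ (p + 1) :=
            mul_le_mul_of_nonneg_left hJp1 (Real.exp_pos _).le
    exact le_of_mul_le_mul_right h2 hJpos
  have hD2J : D2 * J ^ 3 ≤ Real.exp 36 * J ^ p := by
    have key : D2 * J ^ 4 ≤ Real.exp 36 := by
      have hJ4 : J ^ 4 ≤ Real.exp (4 * t) := by
        calc J ^ 4 ≤ (Real.exp t) ^ 4 := pow_le_pow_left₀ hJpos.le hJt 4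
          _ = Real.exp ((4:ℕ) * t) := (Real.exp_nat_mul t 4).symm
          _ = Real.exp (4 * t) := by norm_num
      calc D2 * J ^ 4 ≤ D2 * Real.exp (4 * t) :=
            mul_le_mul_of_nonneg_left hJ4 (Real.exp_pos _).le
        _ = Real.exp (4 * t - (max ((t - 1) / 2) 0) ^ 2 / 2) := by
            rw [← Real.exp_add]; congr 1; ring
        _ ≤ Real.exp 36 := by
            apply Real.exp_le_exp.2
            rcases le_or_gt 1 t with h1 | h1
            · rw [max_eq_left (by linarith)]
              nlinarith [sq_nonneg (t - 17)]
            · rw [max_eq_right (by linarith)]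
              norm_num; linarith
    have hJp1 : (1:ℝ) ≤ J ^ (p + 1) := Real.one_le_rpow hJ1 (by linarith)
    have h2 : (D2 * J ^ 3) * J ≤ ((Real.exp 36) * J ^ p) * J := by
      have he : (Real.exp 36 * J ^ p) * J = Real.exp 36 * J ^ (p + 1) := by
        rw [Real.rpow_add_one hJpos.ne' p]; ring
      have he2 : (D2 * J ^ 3) * J = D2 * J ^ 4 := by ring
      rw [he, he2]
      calc D2 * J ^ 4 ≤ Real.exp 36 := key
        _ = Real.exp 36 * 1 := (mul_one _).symm
        _ ≤ Real.exp 36 * J ^ (p + 1) :=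
            mul_le_mul_of_nonneg_left hJp1 (Real.exp_pos _).le
    exact le_of_mul_le_mul_right h2 hJpos
  -- the hyperplane is null
  have hyper : ∀ᵐ w : V3, w 0 ≠ v 0 := by
    have h := MeasureTheory.Measure.ae_eval_ne (fun _ : Fin 3 => (volume : Measure ℝ)) 0 (v 0)
    rwa [← MeasureTheory.volume_pi] at h
  -- Integrability and bound on B
  have hboxint := (box_integral_bound hp1 v).1
  have hdomB : IntegrableOn (fun w : V3 => Dv * |v 0 - w 0| ^ p) B volume :=
    (hboxint.mono_set (enball_subset_box v 1)).const_mul Dv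
  have haeB : ∀ᵐ w ∂(volume.restrict B), f w ≤ Dv * |v 0 - w 0| ^ p := by
    filter_upwards [ae_restrict_mem measB, ae_restrict_of_ae hyper] with w hwB hw0
    have hpos : 0 < |v 0 - w 0| := abs_pos.2 (sub_ne_zero.2 fun h => hw0 h.symm)
    have hle : |v 0 - w 0| ≤ en (v - w) := by simpa using coord_le_en (v - w) 0
    have h1 : en (v - w) ^ p ≤ |v 0 - w 0| ^ p :=
      Real.rpow_le_rpow_of_nonpos hpos hle hpneg.le
    have h2 := hexpB w hwB
    calc f w ≤ |v 0 - w 0| ^ p * Dv := by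
          exact mul_le_mul h1 h2 (gexp_nonneg w) (Real.rpow_nonneg (abs_nonneg _) p)
      _ = Dv * |v 0 - w 0| ^ p := mul_comm _ _
  have hintB : IntegrableOn f B volume := by
    refine hdomB.mono' ((aesm_integrand v p).restrict) ?_
    filter_upwards [haeB, ae_restrict_of_ae (Filter.Eventually.of_forall hfnonneg)] with w h1 h2
    rwa [Real.norm_eq_abs, abs_of_nonneg h2]
  have hboundB : ∫ w in B, f w ≤ 4 * c₀ * Dv := by
    calc ∫ w in B, f w ≤ ∫ w in B, Dv * |v 0 - w 0| ^ p :=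
          setIntegral_mono_ae_restrict hintB hdomB haeB
      _ = Dv * ∫ w in B, |v 0 - w 0| ^ p := integral_const_mul _ _
      _ ≤ Dv * ∫ w in box v 1, |v 0 - w 0| ^ p := by
          refine mul_le_mul_of_nonneg_left ?_ (Real.exp_pos _).le
          refine setIntegral_mono_set hboxint ?_ ((enball_subset_box v 1).eventuallyLE)
          exact ae_restrict_of_ae (Filter.Eventually.of_forall fun w =>
            Real.rpow_nonneg (abs_nonneg _) p)
      _ ≤ Dv * (4 * c₀) := mul_le_mul_of_nonneg_left (box_integral_bound hp1 v).2
          (Real.exp_pos _).le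
      _ = 4 * c₀ * Dv := by ring
  -- Integrability and bound on A \ B
  have hABfin : volume (A \ B) ≠ ⊤ :=
    ne_top_of_le_ne_top (volume_box_ne_top v r)
      (measure_mono (Set.diff_subset.trans (enball_subset_box v r)))
  have haeAB : ∀ᵐ w ∂(volume.restrict (A \ B)), f w ≤ D2 := by
    filter_upwards [ae_restrict_mem (measA.diff measB)] with w hw
    have hwA : w ∈ A := hw.1
    have hwB : ¬ en (v - w) < 1 := hw.2
    have h1 : en (v - w) ^ p ≤ 1 :=
      Real.rpow_le_one_of_one_le_of_nonpos (not_lt.1 hwB) hpneg.le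
    calc f w ≤ 1 * Real.exp (-en2 w / 2) :=
          mul_le_mul_of_nonneg_right h1 (gexp_nonneg w)
      _ = Real.exp (-en2 w / 2) := one_mul _
      _ ≤ D2 := hexpA w hwA
  have hintAB : IntegrableOn f (A \ B) volume := by
    refine Measure.integrableOn_of_bounded (M := D2) hABfin (aesm_integrand v p) ?_
    filter_upwards [haeAB, ae_restrict_of_ae (Filter.Eventually.of_forall hfnonneg)] with w h1 h2
    rwa [Real.norm_eq_abs, abs_of_nonneg h2]
  have hboundAB : ∫ w in A \ B, f w ≤ 8 * Real.exp 36 * J ^ p := by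
    have h1 : ∫ w in A \ B, f w ≤ ∫ _ in A \ B, D2 :=
      setIntegral_mono_ae_restrict hintAB (integrableOn_const hABfin) haeAB
    have h2 : ∫ _ in A \ B, D2 = (volume (A \ B)).toReal * D2 := by
      rw [setIntegral_const, smul_eq_mul]
      rfl
    have h3 : (volume (A \ B)).toReal ≤ (2 * r) ^ 3 := by
      refine ENNReal.toReal_le_of_le_ofReal (by positivity) ?_
      rw [← volume_box v hr0.le]
      exact measure_mono (Set.diff_subset.trans (enball_subset_box v r))
    have h4 : (2 * r) ^ 3 ≤ (2 * J) ^ 3 := pow_le_pow_left₀ (by positivity) (by linarith) 3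
    have h5 : (volume (A \ B)).toReal * D2 ≤ (2 * J) ^ 3 * D2 := by
      refine mul_le_mul_of_nonneg_right (le_trans h3 h4) (Real.exp_pos _).le
    have h6 : (2 * J) ^ 3 * D2 = 8 * (D2 * J ^ 3) := by ring
    calc ∫ w in A \ B, f w ≤ (volume (A \ B)).toReal * D2 := le_trans h1 h2.le
      _ ≤ (2 * J) ^ 3 * D2 := h5
      _ = 8 * (D2 * J ^ 3) := h6
      _ ≤ 8 * (Real.exp 36 * J ^ p) := by linarith [hD2J]
      _ = 8 * Real.exp 36 * J ^ p := by ring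
  -- Integrability and bound on Aᶜ
  have hdomAc : Integrable (fun w : V3 => (2 * J ^ p) * Real.exp (-en2 w / 2)) :=
    integrable_gexp.const_mul _
  have haeAc : ∀ᵐ w ∂(volume.restrict Aᶜ), f w ≤ (2 * J ^ p) * Real.exp (-en2 w / 2) := by
    filter_upwards [ae_restrict_mem measA.compl] with w hw
    have hw' : r ≤ en (v - w) := not_lt.1 hw
    have h1 : en (v - w) ^ p ≤ (J / 2) ^ p :=
      Real.rpow_le_rpow_of_nonpos (by positivity) (le_trans hrJ2 hw') hpneg.le
    have h2 : (J / 2) ^ p ≤ 2 * J ^ p := by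
      rw [Real.div_rpow hJpos.le (by norm_num : (0:ℝ) ≤ 2)]
      rw [div_eq_mul_inv, ← Real.rpow_neg (by norm_num : (0:ℝ) ≤ 2)]
      have h3 : (2:ℝ) ^ (-p) ≤ 2 ^ (1:ℝ) :=
        Real.rpow_le_rpow_of_exponent_le one_le_two (by linarith)
      rw [Real.rpow_one] at h3
      calc J ^ p * 2 ^ (-p) ≤ J ^ p * 2 :=
            mul_le_mul_of_nonneg_left h3 (Real.rpow_nonneg hJpos.le p)
        _ = 2 * J ^ p := mul_comm _ _
    calc f w ≤ (J / 2) ^ p * Real.exp (-en2 w / 2) :=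
          mul_le_mul_of_nonneg_right h1 (gexp_nonneg w)
      _ ≤ (2 * J ^ p) * Real.exp (-en2 w / 2) :=
          mul_le_mul_of_nonneg_right h2 (gexp_nonneg w)
  have hintAc : IntegrableOn f Aᶜ volume := by
    refine (hdomAc.restrict).mono' ((aesm_integrand v p).restrict) ?_
    filter_upwards [haeAc, ae_restrict_of_ae (Filter.Eventually.of_forall hfnonneg)] with w h1 h2
    rwa [Real.norm_eq_abs, abs_of_nonneg h2]
  have hboundAc : ∫ w in Aᶜ, f w ≤ 2 * K0 * J ^ p := by
    calc ∫ w in Aᶜ, f w ≤ ∫ w in Aᶜ, (2 * J ^ p) * Real.exp (-en2 w / 2) :=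
          setIntegral_mono_ae_restrict hintAc hdomAc.restrict haeAc
      _ = (2 * J ^ p) * ∫ w in Aᶜ, Real.exp (-en2 w / 2) := integral_const_mul _ _
      _ ≤ (2 * J ^ p) * K0 := by
          refine mul_le_mul_of_nonneg_left ?_ (by positivity)
          exact setIntegral_le_integral integrable_gexp
            (Filter.Eventually.of_forall gexp_nonneg)
      _ = 2 * K0 * J ^ p := by ring
  -- assemble
  have hintA : IntegrableOn f A volume := by
    have := hintB.union hintAB
    rwa [Set.union_diff_cancel hBA] at this
  have hint : Integrable f := by
    have := hintA.union hintAc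
    rwa [Set.union_compl_self, integrableOn_univ] at this
  refine ⟨hint, ?_⟩
  have hsplit1 : ∫ w, f w = (∫ w in A, f w) + ∫ w in Aᶜ, f w :=
    (integral_add_compl measA hint).symm
  have hsplit2 : ∫ w in A, f w = (∫ w in B, f w) + ∫ w in A \ B, f w := by
    have h := setIntegral_union (f := f) (μ := volume) Set.disjoint_sdiff_right
      (measA.diff measB) hintB hintAB
    rwa [Set.union_diff_cancel hBA] at h
  have hDvterm : 4 * c₀ * Dv ≤ 4 * c₀ * Real.exp (3/2) * J ^ p := by
    calc 4 * c₀ * Dv ≤ 4 * c₀ * (Real.exp (3/2) * J ^ p) :=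
          mul_le_mul_of_nonneg_left hDvJ (by positivity)
      _ = 4 * c₀ * Real.exp (3/2) * J ^ p := by ring
  rw [hsplit1, hsplit2]
  have hRHS : (4 * c₀ * Real.exp (3/2) + 8 * Real.exp 36 + 2 * K0) * J ^ p
      = 4 * c₀ * Real.exp (3/2) * J ^ p + 8 * Real.exp 36 * J ^ p + 2 * K0 * J ^ p := by ring
  rw [hRHS]
  linarith [hboundB, hboundAB, hboundAc, hDvterm]

lemma F3 {p : ℝ} (hp1 : -1 < p) (hp2 : p ≤ 2) :
    ∃ C : ℝ, 0 < C ∧ ∀ v : V3,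
      Integrable (fun w : V3 => en (v - w) ^ p * Real.exp (-en2 w / 2)) ∧
      ∫ w, en (v - w) ^ p * Real.exp (-en2 w / 2) ≤ C * jap v ^ p := by
  rcases le_or_gt 0 p with hp0 | hpneg
  · set K1 := ∫ w : V3, (1 + en w) ^ 2 * Real.exp (-en2 w / 2) with hK1
    have hK10 : 0 ≤ K1 := integral_nonneg fun w => by positivity
    refine ⟨K1 + 1, by positivity, fun v => ⟨(F3_nonneg hp0 hp2 v).1, ?_⟩⟩
    calc ∫ w, en (v - w) ^ p * Real.exp (-en2 w / 2) ≤ K1 * jap v ^ p :=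
          (F3_nonneg hp0 hp2 v).2
      _ ≤ (K1 + 1) * jap v ^ p := by
          refine mul_le_mul_of_nonneg_right (by linarith) (Real.rpow_nonneg (jap_pos v).le p)
  · set c₀ := ∫ x in (-1:ℝ)..1, |x| ^ p with hc₀
    have hc₀0 : 0 ≤ c₀ := intervalIntegral.integral_nonneg (by norm_num)
      (fun x _ => Real.rpow_nonneg (abs_nonneg x) p)
    set K0 := ∫ w : V3, Real.exp (-en2 w / 2) with hK0
    have hK00 : 0 ≤ K0 := integral_nonneg gexp_nonneg
    refine ⟨4 * c₀ * Real.exp (3/2) + 8 * Real.exp 36 + 2 * K0 + 1, by positivity,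
      fun v => ⟨(F3_neg hp1 hpneg v).1, ?_⟩⟩
    calc ∫ w, en (v - w) ^ p * Real.exp (-en2 w / 2)
        ≤ (4 * c₀ * Real.exp (3/2) + 8 * Real.exp 36 + 2 * K0) * jap v ^ p :=
          (F3_neg hp1 hpneg v).2
      _ ≤ (4 * c₀ * Real.exp (3/2) + 8 * Real.exp 36 + 2 * K0 + 1) * jap v ^ p := by
          refine mul_le_mul_of_nonneg_right (by linarith) (Real.rpow_nonneg (jap_pos v).le p)

/-! #### Pointwise bound on the kernel -/

lemma aK_abs (γ : ℝ) (i j : Fin 3) (u : V3) : |aK γ i j u| ≤ 2 * en u ^ (γ + 2) := by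
  rcases eq_or_ne u 0 with rfl | hu
  · have h0 : en2 (0 : V3) = 0 := by simp [en2]
    have h1 : aK γ i j 0 = 0 := by
      rw [aK, h0]
      simp
    rw [h1, abs_zero]
    exact mul_nonneg (by norm_num) (Real.rpow_nonneg (en_nonneg 0) _)
  · have hpos : 0 < en u := en_pos_of_ne hu
    rw [aK, abs_mul]
    have h2 : |en u ^ γ| = en u ^ γ := abs_of_nonneg (Real.rpow_nonneg (en_nonneg u) γ)
    have h3 : |(if i = j then en2 u else 0) - u i * u j| ≤ 2 * en2 u := by
      have hij : |if i = j then en2 u else 0| ≤ en2 u := by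
        split
        · rw [abs_of_nonneg (en2_nonneg u)]
        · simpa using en2_nonneg u
      have huij : |u i * u j| ≤ en u * en u := by
        rw [abs_mul]
        exact mul_le_mul (coord_le_en u i) (coord_le_en u j) (abs_nonneg _) (en_nonneg u)
      have hsq : en u * en u = en2 u := by rw [← sq_en u]; ring
      calc |(if i = j then en2 u else 0) - u i * u j|
          ≤ |if i = j then en2 u else 0| + |u i * u j| := abs_sub _ _
        _ ≤ en2 u + en u * en u := add_le_add hij huij
        _ = 2 * en2 u := by rw [hsq]; ring
    have h4 : en u ^ (γ + 2) = en u ^ γ * en u ^ 2 := by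
      rw [Real.rpow_add hpos, Real.rpow_two]
    rw [h2]
    calc |(if i = j then en2 u else 0) - u i * u j| * en u ^ γ
        ≤ (2 * en2 u) * en u ^ γ :=
          mul_le_mul_of_nonneg_right h3 (Real.rpow_nonneg (en_nonneg u) γ)
      _ = 2 * en u ^ (γ + 2) := by rw [h4, ← sq_en u]; ring

end Aux

/-- `|ā_{ij}(v)| ≲ ⟨v⟩^{γ+2}`. -/
theorem abar_bound (γ : ℝ) (hγ1 : -3 < γ) (hγ2 : γ < 0) :
    ∃ C > (0 : ℝ), ∀ (i j : Fin 3) (v : V3),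
      |abar γ i j v| ≤ C * jap v ^ (γ + 2) := by
  obtain ⟨C, hC, hF⟩ := F3 (p := γ + 2) (by linarith) (by linarith)
  have hπ : (0:ℝ) < π := Real.pi_pos
  have hc2 : (0:ℝ) < (2 * π) ^ (-(3:ℝ)/2) := Real.rpow_pos_of_pos (by linarith) _
  refine ⟨2 * (2 * π) ^ (-(3:ℝ)/2) * C, by positivity, fun i j v => ?_⟩
  have habar : abar γ i j v = ∫ w, aK γ i j (v - w) * maxw w := rfl
  rw [habar]
  have h1 : |∫ w, aK γ i j (v - w) * maxw w| ≤ ∫ w, |aK γ i j (v - w) * maxw w| := by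
    simpa only [Real.norm_eq_abs] using
      norm_integral_le_integral_norm (μ := volume) (fun w => aK γ i j (v - w) * maxw w)
  have h2 : ∫ w, |aK γ i j (v - w) * maxw w|
      ≤ ∫ w, (2 * (2 * π) ^ (-(3:ℝ)/2)) * (en (v - w) ^ (γ + 2) * Real.exp (-en2 w / 2)) := by
    refine integral_mono_of_nonneg (Filter.Eventually.of_forall fun w => abs_nonneg _)
      (((hF v).1).const_mul _) (Filter.Eventually.of_forall fun w => ?_)
    have hmw : maxw w = (2 * π) ^ (-(3:ℝ)/2) * Real.exp (-en2 w / 2) := rfl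
    simp only []
    rw [hmw, abs_mul]
    have hm : |(2 * π) ^ (-(3:ℝ)/2) * Real.exp (-en2 w / 2)|
        = (2 * π) ^ (-(3:ℝ)/2) * Real.exp (-en2 w / 2) := abs_of_nonneg (by positivity)
    rw [hm]
    calc |aK γ i j (v - w)| * ((2 * π) ^ (-(3:ℝ)/2) * Real.exp (-en2 w / 2))
        ≤ (2 * en (v - w) ^ (γ + 2)) * ((2 * π) ^ (-(3:ℝ)/2) * Real.exp (-en2 w / 2)) :=
          mul_le_mul_of_nonneg_right (aK_abs γ i j (v - w)) (by positivity)
      _ = (2 * (2 * π) ^ (-(3:ℝ)/2)) * (en (v - w) ^ (γ + 2) * Real.exp (-en2 w / 2)) := by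
          ring
  have h3 : ∫ w, (2 * (2 * π) ^ (-(3:ℝ)/2)) * (en (v - w) ^ (γ + 2) * Real.exp (-en2 w / 2))
      = (2 * (2 * π) ^ (-(3:ℝ)/2)) * ∫ w, en (v - w) ^ (γ + 2) * Real.exp (-en2 w / 2) :=
    integral_const_mul _ _
  have h4 : (2 * (2 * π) ^ (-(3:ℝ)/2)) * (∫ w, en (v - w) ^ (γ + 2) * Real.exp (-en2 w / 2))
      ≤ (2 * (2 * π) ^ (-(3:ℝ)/2)) * (C * jap v ^ (γ + 2)) :=
    mul_le_mul_of_nonneg_left (hF v).2 (by positivity)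
  calc |∫ w, aK γ i j (v - w) * maxw w|
      ≤ ∫ w, |aK γ i j (v - w) * maxw w| := h1
    _ ≤ ∫ w, (2 * (2 * π) ^ (-(3:ℝ)/2)) * (en (v - w) ^ (γ + 2) * Real.exp (-en2 w / 2)) := h2
    _ = (2 * (2 * π) ^ (-(3:ℝ)/2)) * ∫ w, en (v - w) ^ (γ + 2) * Real.exp (-en2 w / 2) := h3
    _ ≤ (2 * (2 * π) ^ (-(3:ℝ)/2)) * (C * jap v ^ (γ + 2)) := h4
    _ = 2 * (2 * π) ^ (-(3:ℝ)/2) * C * jap v ^ (γ + 2) := by ring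

end
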